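/- No gonosomal algebra satisfies the Jacobi identity: for any gonosomal algebra A of type (n,ν) over K, there exist x, y, z ∈ A with (xy)z + (yz)x + (zx)y ≠ 0. -/

import Mathlib

/-- No gonosomal algebra satisfies the Jacobi identity: there exist `x, y, z`
with `(xy)z + (yz)x + (zx)y ≠ 0`. -/
theorem gonosomal_not_jacobi
    {K : Type*} [Field K] (hchar : ringChar K ≠ 2)
    {n ν : ℕ} (hn : 1 ≤ n) (hν : 1 ≤ ν)
    {A : Type*} [AddCommGroup A] [Module K A]
    (mul : A →ₗ[K] A →ₗ[K] A)
    (b : Module.Basis (Fin n ⊕ Fin ν) K A)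
    (γ : Fin n → Fin ν → Fin n → K) (γt : Fin n → Fin ν → Fin ν → K)
    (hee : ∀ i j : Fin n, mul (b (Sum.inl i)) (b (Sum.inl j)) = 0)
    (hff : ∀ p q : Fin ν, mul (b (Sum.inr p)) (b (Sum.inr q)) = 0)
    (hef : ∀ (i : Fin n) (p : Fin ν),
      mul (b (Sum.inl i)) (b (Sum.inr p)) =
        (∑ k, γ i p k • b (Sum.inl k)) + (∑ r, γt i p r • b (Sum.inr r)))
    (hfe : ∀ (i : Fin n) (p : Fin ν),
      mul (b (Sum.inr p)) (b (Sum.inl i)) = mul (b (Sum.inl i)) (b (Sum.inr p)))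
    (hsum : ∀ (i : Fin n) (p : Fin ν),
      (∑ k, γ i p k) + (∑ r, γt i p r) = 1) :
    ∃ x y z : A, mul (mul x y) z + mul (mul y z) x + mul (mul z x) y ≠ 0 := by
  by_contra hcon
  push_neg at hcon
  have h2 : (2 : K) ≠ 0 := Ring.two_ne_zero hchar
  set i0 : Fin n := ⟨0, hn⟩
  set p0 : Fin ν := ⟨0, hν⟩
  set e : A := b (Sum.inl i0) with he
  set f : A := b (Sum.inr p0) with hf
  -- Jacobi on (e, f, e) gives (ef)e = 0
  have hwe : mul (mul e f) e = 0 := by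
    have h1 := hcon e f e
    rw [hfe i0 p0, hee i0 i0] at h1
    simp only [map_zero, LinearMap.zero_apply, add_zero] at h1
    have h2' : (2 : K) • mul (mul e f) e = 0 := by
      rw [two_smul]; exact h1
    rcases smul_eq_zero.mp h2' with h | h
    · exact absurd h h2
    · exact h
  -- Jacobi on (f, e, f) gives (ef)f = 0
  have hwf : mul (mul e f) f = 0 := by
    have h1 := hcon f e f
    rw [hfe i0 p0, hff p0 p0] at h1
    simp only [map_zero, LinearMap.zero_apply, add_zero] at h1
    have h2' : (2 : K) • mul (mul e f) f = 0 := by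
      rw [two_smul]; exact h1
    rcases smul_eq_zero.mp h2' with h | h
    · exact absurd h h2
    · exact h
  -- the weight functional
  set ω : A →ₗ[K] K := b.constr K (fun _ => (1 : K)) with hω
  have hω1 : ∀ (i : Fin n) (p : Fin ν),
      ω (mul (b (Sum.inl i)) (b (Sum.inr p))) = 1 := by
    intro i p
    rw [hef i p]
    simp only [map_add, map_sum, map_smul, hω, Module.Basis.constr_basis,
      smul_eq_mul, mul_one]
    exact hsum i p
  have key1 : ω (mul (mul e f) e) = ∑ r, γt i0 p0 r := by
    rw [hef i0 p0]
    simp only [map_add, LinearMap.add_apply, map_sum, LinearMap.sum_apply,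
      map_smul, LinearMap.smul_apply, he, hee, hfe, hω1, smul_eq_mul, mul_one,
      smul_zero, Finset.sum_const_zero, map_zero, zero_add]
  have key2 : ω (mul (mul e f) f) = ∑ k, γ i0 p0 k := by
    rw [hef i0 p0]
    simp only [map_add, LinearMap.add_apply, map_sum, LinearMap.sum_apply,
      map_smul, LinearMap.smul_apply, hf, hff, hω1, smul_eq_mul, mul_one,
      smul_zero, Finset.sum_const_zero, map_zero, add_zero]
  rw [hwe, map_zero] at key1
  rw [hwf, map_zero] at key2
  have := hsum i0 p0
  rw [← key1, ← key2, add_zero] at this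
  exact zero_ne_one this
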